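/- Let f be the inverse of h(u) = (1/2)u√(1+u²) + (1/2)ln(u + √(1+u²)) and define L(v) = f(v)². Then L satisfies the Δ₂-condition L(2v) ≤ 4·L(v) for every v ∈ ℝ. -/
import Mathlib


/-- The change of variables `h(u) = (1/2)·u·√(1+u²) + (1/2)·ln(u + √(1+u²))`. -/
noncomputable def h (u : ℝ) : ℝ :=
  (1 / 2) * u * Real.sqrt (1 + u ^ 2) + (1 / 2) * Real.log (u + Real.sqrt (1 + u ^ 2))

lemma h_eq (u : ℝ) : h u = (1 / 2) * u * Real.sqrt (1 + u ^ 2) + (1 / 2) * Real.arsinh u := by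
  rw [h, Real.arsinh]

lemma h_odd (u : ℝ) : h (-u) = -h u := by
  rw [h_eq, h_eq, Real.arsinh_neg]
  have : (-u) ^ 2 = u ^ 2 := by ring
  rw [this]; ring

lemma h_mono : Monotone h := by
  intro a b hab
  rw [h_eq, h_eq]
  have ha := Real.sinh_arsinh a
  have hb := Real.sinh_arsinh b
  have hca := Real.cosh_arsinh a
  have hcb := Real.cosh_arsinh b
  have h1 : Real.arsinh a ≤ Real.arsinh b := Real.arsinh_le_arsinh.mpr hab
  have h2 : Real.sinh (2 * Real.arsinh a) ≤ Real.sinh (2 * Real.arsinh b) :=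
    Real.sinh_le_sinh.mpr (by linarith)
  rw [Real.sinh_two_mul, Real.sinh_two_mul, ha, hb] at h2
  have hsa : Real.sqrt (1 + a ^ 2) = Real.cosh (Real.arsinh a) := by
    rw [hca, add_comm]
  have hsb : Real.sqrt (1 + b ^ 2) = Real.cosh (Real.arsinh b) := by
    rw [hcb, add_comm]
  rw [hsa, hsb]
  nlinarith [h2]

lemma h_key {u : ℝ} (hu : 0 ≤ u) : 2 * h u ≤ h (2 * u) := by
  set A := Real.sqrt (1 + u ^ 2) with hAdef
  set B := Real.sqrt (1 + (2 * u) ^ 2) with hBdef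
  have hA2 : A ^ 2 = 1 + u ^ 2 := Real.sq_sqrt (by positivity)
  have hB2 : B ^ 2 = 1 + 4 * u ^ 2 := by
    rw [hBdef, Real.sq_sqrt (by positivity)]; ring
  have hA1 : 1 ≤ A := by
    rw [hAdef]
    nlinarith [Real.sq_sqrt (show (0:ℝ) ≤ 1 + u ^ 2 by positivity),
      Real.sqrt_nonneg (1 + u ^ 2)]
  have hB1 : 1 ≤ B := by
    nlinarith [Real.sqrt_nonneg (1 + (2 * u) ^ 2)]
  have hAB : A ≤ B := by
    rw [hAdef, hBdef]
    apply Real.sqrt_le_sqrt; nlinarith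
  have huA : 0 < u + A := by linarith
  have h2B : 0 < 2 * u + B := by linarith
  -- log bound
  have hlog : Real.log ((u + A) ^ 2 / (2 * u + B)) ≤ (u + A) ^ 2 / (2 * u + B) - 1 :=
    Real.log_le_sub_one_of_pos (by positivity)
  rw [Real.log_div (by positivity) (ne_of_gt h2B), Real.log_pow] at hlog
  -- frac bound
  have hfrac : (u + A) ^ 2 / (2 * u + B) - 1 ≤ 2 * u * (B - A) := by
    rw [div_sub_one (ne_of_gt h2B), div_le_iff₀ h2B]
    nlinarith [sq_nonneg (B - A), sq_nonneg (A - 1), mul_nonneg hu (sub_nonneg.mpr hAB),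
      mul_nonneg (mul_nonneg hu hu) (sub_nonneg.mpr hAB), sq_nonneg (B - 1)]
  rw [h, h, ← hAdef, ← hBdef]
  push_cast at hlog
  nlinarith [hlog, hfrac]

lemma h_zero : h 0 = 0 := by
  simp [h]

/-- Let `f` be the inverse of `h` and `L(v) = f(v)²`.  Then `L` satisfies the
`Δ₂`-condition `L(2v) ≤ 4·L(v)` for every `v`. -/
theorem L_delta_two (f : ℝ → ℝ)
    (hf₁ : Function.LeftInverse f h) (hf₂ : Function.RightInverse f h)
    (L : ℝ → ℝ) (hL : ∀ v : ℝ, L v = f v ^ 2) :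
    ∀ v : ℝ, L (2 * v) ≤ 4 * L v := by
  have hinj : Function.Injective h := hf₁.injective
  have hf0 : f 0 = 0 := by
    have := hf₁ 0
    rwa [h_zero] at this
  have hfodd : ∀ v : ℝ, f (-v) = -f v := by
    intro v
    apply hinj
    rw [hf₂, h_odd, hf₂]
  -- nonneg case
  have key : ∀ v : ℝ, 0 ≤ v → f (2 * v) ^ 2 ≤ 4 * f v ^ 2 := by
    intro v hv
    have hfv : 0 ≤ f v := by
      by_contra hneg
      push_neg at hneg
      have h1 : h (f v) ≤ h 0 := by
        rw [h_zero]
        have := h_mono hneg.le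
        rwa [h_zero] at this
      rw [hf₂, h_zero] at h1
      have hv0 : v = 0 := le_antisymm h1 hv
      rw [hv0, hf0] at hneg
      exact lt_irrefl 0 hneg
    have hkey : h (f (2 * v)) ≤ h (2 * f v) := by
      rw [hf₂]
      calc (2 : ℝ) * v = 2 * h (f v) := by rw [hf₂]
        _ ≤ h (2 * f v) := h_key hfv
    have hle : f (2 * v) ≤ 2 * f v := by
      by_contra hgt
      push_neg at hgt
      have := h_mono hgt.le
      have heq : h (2 * f v) = h (f (2 * v)) := le_antisymm this hkey
      have := hinj heq
      rw [this] at hgt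
      exact lt_irrefl _ hgt
    have hge : 0 ≤ f (2 * v) := by
      by_contra hneg
      push_neg at hneg
      have h1 := h_mono hneg.le
      rw [hf₂, h_zero] at h1
      have hv0 : 2 * v = 0 := le_antisymm h1 (by linarith)
      rw [hv0, hf0] at hneg
      exact lt_irrefl 0 hneg
    nlinarith [hle, hge, hfv]
  intro v
  rw [hL, hL]
  rcases le_or_gt 0 v with hv | hv
  · exact key v hv
  · have h1 := key (-v) (by linarith)
    have e1 : f (2 * -v) = -f (2 * v) := by
      rw [show (2 : ℝ) * -v = -(2 * v) by ring, hfodd]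
    rw [e1, hfodd] at h1
    nlinarith [h1]
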